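/- Existence of a Nikodym-type configuration after pigeonholing and rotation: given a full-measure set F₀ ⊆ [-1,1]² with |F₀| = 4, a null set E₀, and a measurable direction function α : F₀ → [0,π) such that the line through w in direction α(w), minus {w}, lies in E₀, there exist k ∈ {0,…,4N−1}, a rotation ρ, a set F = ρ(F̃_k) with |F| ≥ π/(4N), and a null set E = ρ(E₀), such that for every w ∈ F there is a line ℓ(w) through w with direction angle γ(w) ∈ [(1−1/N)π/4, π/4) and ℓ(w) \ {w} ⊆ E. -/

import Mathlib

open MeasureTheory Real

/-- Nikodym-type configuration after pigeonholing and rotation: given a set `F₀ ⊆ [-1,1]²`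
of full measure `4`, a null set `E₀`, and a measurable direction function
`α : ℝ² → [0,π)` such that for every `w ∈ F₀` the line through `w` in direction `α(w)`,
minus `{w}`, lies in `E₀`, there exist `k ∈ {0,…,4N−1}` and a rotation `ρ` (by angle `β`)
such that the set `F = ρ(F̃_k)` has measure at least `π/(4N)`, `E = ρ(E₀)` is null, and
for every `w ∈ F` there is a line through `w` with direction angle
`γ(w) ∈ [(1−1/N)π/4, π/4)` whose complement of `{w}` lies in `E`. -/
theorem nikodym_pigeonhole (N : ℕ) (hN : 6 ≤ N)
    (F₀ E₀ : Set (ℝ × ℝ)) (hF₀sub : F₀ ⊆ Set.Icc (-1, -1) (1, 1))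
    (hF₀meas : volume F₀ = 4) (hE₀ : volume E₀ = 0)
    (α : ℝ × ℝ → ℝ) (hαmeas : Measurable α)
    (hαrange : ∀ w ∈ F₀, α w ∈ Set.Ico 0 π)
    (hline : ∀ w ∈ F₀, ∀ r : ℝ, r ≠ 0 →
      w + r • (Real.cos (α w), Real.sin (α w)) ∈ E₀) :
    ∃ k : ℕ, k < 4 * N ∧ ∃ β : ℝ,
      ∀ ρ : ℝ × ℝ → ℝ × ℝ,
        (ρ = fun w => (w.1 * Real.cos β - w.2 * Real.sin β,
                        w.1 * Real.sin β + w.2 * Real.cos β)) →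
      ∀ F E : Set (ℝ × ℝ),
        F = ρ '' {w ∈ F₀ | w.1 ^ 2 + w.2 ^ 2 ≤ 1 ∧
          α w ∈ Set.Ico ((k : ℝ) * π / (4 * N)) (((k : ℝ) + 1) * π / (4 * N))} →
        E = ρ '' E₀ →
        volume E = 0 ∧ ENNReal.ofReal (π / (4 * N)) ≤ volume F ∧
        ∃ γ : ℝ × ℝ → ℝ, ∀ w ∈ F,
          γ w ∈ Set.Ico ((1 - 1 / (N : ℝ)) * (π / 4)) (π / 4) ∧
          ∀ r : ℝ, r ≠ 0 → w + r • (Real.cos (γ w), Real.sin (γ w)) ∈ E := by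
  have hπ : (0:ℝ) < π := Real.pi_pos
  have hN0 : (0:ℝ) < (N:ℝ) := by exact_mod_cast (by omega : 0 < N)
  have h4N : (0:ℝ) < 4 * (N:ℝ) := by positivity
  set D : Set (ℝ×ℝ) := {w : ℝ×ℝ | w.1^2 + w.2^2 ≤ 1} with hD
  have hDm : MeasurableSet D :=
    (isClosed_le (by fun_prop) continuous_const).measurableSet
  have hDvol : volume D = ENNReal.ofReal π := by
    have hpre : Complex.measurableEquivRealProd ⁻¹' D = Metric.closedBall (0:ℂ) 1 := by
      ext z
      simp only [hD, Set.mem_preimage, Complex.measurableEquivRealProd_apply, Set.mem_setOf_eq,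
        Metric.mem_closedBall, Complex.dist_eq, sub_zero]
      have h2 : ‖z‖ ^ 2 = z.re ^ 2 + z.im ^ 2 := by
        rw [Complex.sq_norm, Complex.normSq_apply]; ring
      constructor
      · intro h; nlinarith [norm_nonneg z]
      · intro h; nlinarith [norm_nonneg z]
    have := Complex.volume_preserving_equiv_real_prod.measure_preimage hDm.nullMeasurableSet
    rw [hpre] at this
    rw [← this, Complex.volume_closedBall]
    simp [← NNReal.coe_real_pi, ENNReal.ofReal_coe_nnreal]
  have hDsub : D ⊆ Set.Icc ((-1:ℝ), (-1:ℝ)) (1, 1) := by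
    intro w hw
    simp only [hD, Set.mem_setOf_eq] at hw
    simp only [Set.mem_Icc, Prod.le_def]
    refine ⟨⟨?_, ?_⟩, ?_, ?_⟩ <;>
      nlinarith [sq_nonneg (w.1+1), sq_nonneg (w.1-1), sq_nonneg (w.2+1), sq_nonneg (w.2-1),
        sq_nonneg w.1, sq_nonneg w.2]
  have hIccVol : volume (Set.Icc ((-1:ℝ), (-1:ℝ)) ((1:ℝ), (1:ℝ))) = 4 := by
    rw [Set.Icc_prod_eq, Measure.volume_eq_prod ℝ ℝ, Measure.prod_prod, Real.volume_Icc]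
    rw [← ENNReal.ofReal_mul (by norm_num)]; norm_num
  have hFD : ENNReal.ofReal π ≤ volume (F₀ ∩ D) := by
    have hπ4 : ENNReal.ofReal π ≤ 4 := by
      rw [show (4:ENNReal) = ENNReal.ofReal 4 by norm_num]
      exact ENNReal.ofReal_le_ofReal Real.pi_le_four
    have hsq : volume (F₀ \ D) ≤ 4 - ENNReal.ofReal π := by
      calc volume (F₀ \ D) ≤ volume (Set.Icc ((-1:ℝ), (-1:ℝ)) (1, 1) \ D) :=
            measure_mono (Set.diff_subset_diff_left hF₀sub)
        _ = 4 - ENNReal.ofReal π := by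
            rw [measure_diff hDsub hDm.nullMeasurableSet
              (by rw [hDvol]; exact ENNReal.ofReal_ne_top), hIccVol, hDvol]
    have h1 : volume F₀ ≤ volume (F₀ ∩ D) + volume (F₀ \ D) := by
      conv_lhs => rw [← Set.inter_union_diff F₀ D]
      exact measure_union_le _ _
    rw [hF₀meas] at h1
    have h2 : (4:ENNReal) ≤ volume (F₀ ∩ D) + (4 - ENNReal.ofReal π) :=
      h1.trans (add_le_add_right hsq _)
    have h3 : (4:ENNReal) - (4 - ENNReal.ofReal π) ≤ volume (F₀ ∩ D) :=
      tsub_le_iff_right.2 h2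
    rwa [ENNReal.sub_sub_cancel (by norm_num) hπ4] at h3
  set S : ℕ → Set (ℝ×ℝ) := fun k => {w ∈ F₀ | w.1 ^ 2 + w.2 ^ 2 ≤ 1 ∧
    α w ∈ Set.Ico ((k : ℝ) * π / (4 * N)) (((k : ℝ) + 1) * π / (4 * N))} with hS
  have hcover : F₀ ∩ D ⊆ ⋃ k ∈ Finset.range (4*N), S k := by
    rintro w ⟨hwF, hwD⟩
    obtain ⟨hθ0, hθπ⟩ := hαrange w hwF
    set θ := α w with hθ
    set t := θ * (4*(N:ℝ)) / π with ht
    have ht0 : 0 ≤ t := by positivity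
    have h1 : (⌊t⌋₊ : ℝ) ≤ t := Nat.floor_le ht0
    have h2 : t < ⌊t⌋₊ + 1 := Nat.lt_floor_add_one t
    have hklt : ⌊t⌋₊ < 4 * N := by
      have htlt : t < ((4*N : ℕ) : ℝ) := by
        rw [ht, div_lt_iff₀ hπ]; push_cast; nlinarith
      exact (Nat.floor_lt ht0).2 htlt
    refine Set.mem_biUnion (Finset.mem_range.2 hklt) ?_
    refine ⟨hwF, by simpa [hD] using hwD, ?_, ?_⟩
    · rw [div_le_iff₀ h4N]
      have := (le_div_iff₀ hπ).mp h1
      linarith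
    · rw [lt_div_iff₀ h4N]
      have := (div_lt_iff₀ hπ).mp h2
      linarith
  obtain ⟨k, hkmem, hkmax⟩ := Finset.exists_max_image (Finset.range (4*N))
    (fun k => volume (S k)) ⟨0, Finset.mem_range.2 (by omega)⟩
  have hk : k < 4*N := Finset.mem_range.1 hkmem
  have hSk : ENNReal.ofReal (π / (4 * N)) ≤ volume (S k) := by
    have hsum : ENNReal.ofReal π ≤ ∑ i ∈ Finset.range (4*N), volume (S i) :=
      hFD.trans ((measure_mono hcover).trans (measure_biUnion_finset_le _ _))
    have hsum2 : ∑ i ∈ Finset.range (4*N), volume (S i) ≤ ((4*N : ℕ) : ENNReal) * volume (S k) := by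
      calc ∑ i ∈ Finset.range (4*N), volume (S i)
          ≤ ∑ _i ∈ Finset.range (4*N), volume (S k) := Finset.sum_le_sum (fun i hi => hkmax i hi)
        _ = ((4*N : ℕ) : ENNReal) * volume (S k) := by
            rw [Finset.sum_const, Finset.card_range, nsmul_eq_mul]
    have hA0 : ((4*N : ℕ) : ENNReal) ≠ 0 := by
      simp only [ne_eq, Nat.cast_eq_zero]; omega
    have hAt : ((4*N : ℕ) : ENNReal) ≠ ⊤ := ENNReal.natCast_ne_top _
    have : ENNReal.ofReal (π / (4 * N)) = ENNReal.ofReal π / ((4*N : ℕ) : ENNReal) := by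
      rw [ENNReal.ofReal_div_of_pos h4N]
      congr 1
      rw [← ENNReal.ofReal_natCast]
      congr 1
      push_cast; ring
    rw [this, ENNReal.div_le_iff_le_mul (Or.inl hA0) (Or.inl hAt)]
    exact hsum.trans (hsum2.trans_eq (mul_comm _ _))
  refine ⟨k, hk, π/4 - ((k:ℝ)+1)*π/(4*N), ?_⟩
  intro ρ hρ F E hF hE
  set β := π/4 - ((k:ℝ)+1)*π/(4*N) with hβ
  set L := Matrix.toLin (Module.Basis.finTwoProd ℝ) (Module.Basis.finTwoProd ℝ)
    !![Real.cos β, -Real.sin β; Real.sin β, Real.cos β] with hL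
  have hρL : ρ = ⇑L := by
    funext w
    rw [hρ, hL, Matrix.toLin_finTwoProd_apply]
    exact Prod.ext (by ring) (by ring)
  have hdet : ENNReal.ofReal |LinearMap.det L| = 1 := by
    rw [hL, LinearMap.det_toLin, Matrix.det_fin_two_of]
    have h1 : Real.cos β * Real.cos β - -Real.sin β * Real.sin β = 1 := by
      nlinarith [Real.sin_sq_add_cos_sq β]
    rw [h1]; simp
  have hEvol : volume E = 0 := by
    rw [hE, hρL, Measure.addHaar_image_linearMap, hdet, hE₀, mul_zero]
  have hFvol : volume F = volume (S k) := by
    rw [hF, hρL, Measure.addHaar_image_linearMap, hdet, one_mul]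
  refine ⟨hEvol, hFvol ▸ hSk,
    fun w => α (w.1 * Real.cos β + w.2 * Real.sin β,
      -w.1 * Real.sin β + w.2 * Real.cos β) + β, ?_⟩
  intro w hw
  rw [hF] at hw
  obtain ⟨v, hv, rfl⟩ := hw
  obtain ⟨hvF, hvD, hvα⟩ := hv
  have hsc := Real.sin_sq_add_cos_sq β
  have hinv : ((ρ v).1 * Real.cos β + (ρ v).2 * Real.sin β,
      -(ρ v).1 * Real.sin β + (ρ v).2 * Real.cos β) = v := by
    rw [hρ]
    refine Prod.ext ?_ ?_
    · dsimp; linear_combination v.1 * hsc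
    · dsimp; linear_combination v.2 * hsc
  have hγ : (fun w : ℝ×ℝ => α (w.1 * Real.cos β + w.2 * Real.sin β,
      -w.1 * Real.sin β + w.2 * Real.cos β) + β) (ρ v) = α v + β := by
    simp only [hinv]
  constructor
  · rw [hγ]
    obtain ⟨hα1, hα2⟩ := hvα
    have hNne : (N:ℝ) ≠ 0 := ne_of_gt hN0
    have hlow : (1 - 1/(N:ℝ)) * (π/4) = π/4 - π/(4*N) := by
      field_simp
    constructor
    · rw [hlow, hβ]
      have he : (k:ℝ)*π/(4*(N:ℝ)) + (π/4 - ((k:ℝ)+1)*π/(4*(N:ℝ))) = π/4 - π/(4*(N:ℝ)) := by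
        field_simp; ring
      linarith
    · rw [hβ]; linarith
  · intro r hr
    rw [hE]
    refine ⟨v + r • (Real.cos (α v), Real.sin (α v)), hline v hvF r hr, ?_⟩
    rw [hγ, hρ]
    have hc := Real.cos_add (α v) β
    have hs := Real.sin_add (α v) β
    dsimp
    refine Prod.ext ?_ ?_ <;> dsimp
    · rw [hc]; ring
    · rw [hs]; ring
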